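/- Let A be a set of qubits, j ∉ A, and let S be the Pauli word with Z on every qubit of A ∪ {j} and identity elsewhere. Let P = P(A, j) be the stabilizer-rotation Pauli word (Z on every qubit of A, Y on j, identity elsewhere) and Y_j the Pauli word with Y on qubit j and identity elsewhere. Then the composition of the two π/4 Pauli rotations maps the Z-type stabilizer S to a single-qubit Pauli Z up to sign: exp(i(π/4)Y_j) · exp(i(π/4)P) · S · exp(−i(π/4)P) · exp(−i(π/4)Y_j) = −Z_j, where Z_j is the Pauli word with Z on qubit j and identity elsewhere. -/

import Mathlib

open Matrix Complex Real

/-- The single-qubit identity matrix. -/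
noncomputable def PauliI : Matrix (Fin 2) (Fin 2) ℂ := !![1, 0; 0, 1]

/-- The single-qubit Pauli X matrix. -/
noncomputable def PauliX : Matrix (Fin 2) (Fin 2) ℂ := !![0, 1; 1, 0]

/-- The single-qubit Pauli Y matrix. -/
noncomputable def PauliY : Matrix (Fin 2) (Fin 2) ℂ := !![0, -Complex.I; Complex.I, 0]

/-- The single-qubit Pauli Z matrix. -/
noncomputable def PauliZ : Matrix (Fin 2) (Fin 2) ℂ := !![1, 0; 0, -1]

/-- The Pauli word `W(p)`: the `n`-fold Kronecker/tensor product of the single-qubit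
matrices `p i`, i.e. the `2^n × 2^n` matrix with entries `W(p)(a,b) = ∏ i, p i (a i) (b i)`. -/
noncomputable def PauliWord (n : ℕ) (p : Fin n → Matrix (Fin 2) (Fin 2) ℂ) :
    Matrix (Fin n → Fin 2) (Fin n → Fin 2) ℂ :=
  Matrix.of fun a b => ∏ i, p i (a i) (b i)

/-- The stabilizer-rotation Pauli word `P(A, j)`: Pauli Z on every qubit of `A`,
Pauli Y on qubit `j`, and identity elsewhere. -/
noncomputable def stabRot (n : ℕ) (A : Finset (Fin n)) (j : Fin n) :
    Matrix (Fin n → Fin 2) (Fin n → Fin 2) ℂ :=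
  PauliWord n fun i => if i = j then PauliY else if i ∈ A then PauliZ else PauliI

/-- The computational basis vector `e_b` indexed by the bit string `b`. -/
noncomputable def basisVec (n : ℕ) (b : Fin n → Fin 2) : (Fin n → Fin 2) → ℂ :=
  fun a => if a = b then 1 else 0

/- ### Auxiliary lemmas -/

lemma exp_invol {N : Type*} [Fintype N] [DecidableEq N] (M : Matrix N N ℂ)
    (h : M * M = 1) (t : ℂ) :
    NormedSpace.exp (t • M) =
      ((Complex.exp t + Complex.exp (-t)) / 2) • (1 : Matrix N N ℂ) +
      ((Complex.exp t - Complex.exp (-t)) / 2) • M := by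
  letI : SeminormedRing (Matrix N N ℂ) := Matrix.linftyOpSemiNormedRing
  letI : NormedRing (Matrix N N ℂ) := Matrix.linftyOpNormedRing
  letI : NormedAlgebra ℂ (Matrix N N ℂ) := Matrix.linftyOpNormedAlgebra
  set f : ℂ × ℂ →+* Matrix N N ℂ :=
    { toFun := fun z => ((z.1 + z.2) / 2) • (1 : Matrix N N ℂ) + ((z.1 - z.2) / 2) • M
      map_one' := by norm_num
      map_mul' := fun z w => by
        simp only [Prod.fst_mul, Prod.snd_mul]
        rw [mul_add, add_mul, add_mul]
        simp only [smul_mul_assoc, mul_smul_comm, smul_smul, one_mul, mul_one, h]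
        match_scalars <;> ring
      map_zero' := by norm_num
      map_add' := fun z w => by
        simp only [Prod.fst_add, Prod.snd_add]
        match_scalars <;> ring } with hf
  have hcont : Continuous f := by
    show Continuous fun z : ℂ × ℂ =>
      ((z.1 + z.2) / 2) • (1 : Matrix N N ℂ) + ((z.1 - z.2) / 2) • M
    fun_prop
  have key := NormedSpace.map_exp f hcont (t, -t)
  have h1 : f (t, -t) = t • M := by
    show ((t + -t) / 2) • (1 : Matrix N N ℂ) + ((t - -t) / 2) • M = t • M
    rw [show (t + -t) / 2 = 0 by ring, show (t - -t) / 2 = t by ring]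
    simp
  have h2 : NormedSpace.exp ((t, -t) : ℂ × ℂ) = (Complex.exp t, Complex.exp (-t)) := by
    ext
    · rw [Prod.fst_exp, ← Complex.exp_eq_exp_ℂ]
    · rw [Prod.snd_exp, ← Complex.exp_eq_exp_ℂ]
  rw [h1, h2] at key
  exact key.symm

lemma PauliWord_mul (n : ℕ) (p q : Fin n → Matrix (Fin 2) (Fin 2) ℂ) :
    PauliWord n p * PauliWord n q = PauliWord n (fun i => p i * q i) := by
  ext a b
  simp only [PauliWord, Matrix.mul_apply, Matrix.of_apply, Fintype.prod_sum,
    ← Finset.prod_mul_distrib]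

lemma PauliI_eq_one : PauliI = 1 := Matrix.one_fin_two.symm

lemma PauliWord_one (n : ℕ) : PauliWord n (fun _ => PauliI) = 1 := by
  ext a b
  simp only [PauliWord, Matrix.of_apply, PauliI_eq_one]
  by_cases hab : a = b
  · subst hab
    simp [Matrix.one_apply]
  · rw [Matrix.one_apply_ne hab]
    obtain ⟨i, hi⟩ : ∃ i, a i ≠ b i := by
      by_contra hc
      push_neg at hc
      exact hab (funext hc)
    exact Finset.prod_eq_zero (Finset.mem_univ i) (Matrix.one_apply_ne hi)

lemma PauliWord_smul_site (n : ℕ) (j : Fin n) (c : ℂ)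
    (m : Matrix (Fin 2) (Fin 2) ℂ) (r : Fin n → Matrix (Fin 2) (Fin 2) ℂ) :
    PauliWord n (fun i => if i = j then c • m else r i) =
      c • PauliWord n (fun i => if i = j then m else r i) := by
  ext a b
  simp only [PauliWord, Matrix.of_apply, Matrix.smul_apply, smul_eq_mul]
  rw [show (∏ i, (if i = j then c • m else r i) (a i) (b i)) =
      ∏ i, (if i = j then c else 1) * (if i = j then m else r i) (a i) (b i) by
    apply Finset.prod_congr rfl; intro i _; split <;> simp]
  rw [Finset.prod_mul_distrib, Finset.prod_ite_eq' Finset.univ j (fun _ => c)]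
  simp

/- single-qubit multiplication table (the entries we need) -/

lemma mulZZ : PauliZ * PauliZ = PauliI := by
  ext i k; fin_cases i <;> fin_cases k <;> simp [PauliZ, PauliI]

lemma mulYY : PauliY * PauliY = PauliI := by
  ext i k; fin_cases i <;> fin_cases k <;> simp [PauliY, PauliI]

lemma mulYZ : PauliY * PauliZ = Complex.I • PauliX := by
  ext i k; fin_cases i <;> fin_cases k <;> simp [PauliY, PauliZ, PauliX]

lemma mulZY : PauliZ * PauliY = (-Complex.I) • PauliX := by
  ext i k; fin_cases i <;> fin_cases k <;> simp [PauliY, PauliZ, PauliX]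

lemma mulXY : PauliX * PauliY = Complex.I • PauliZ := by
  ext i k; fin_cases i <;> fin_cases k <;> simp [PauliY, PauliZ, PauliX]

lemma mulYX : PauliY * PauliX = (-Complex.I) • PauliZ := by
  ext i k; fin_cases i <;> fin_cases k <;> simp [PauliY, PauliZ, PauliX]

/-- Conjugation of an anticommuting element by `a•1 + b•E` with `E² = 1`. -/
lemma conj_lemma {R : Type*} [Ring R] [Algebra ℂ R] (a b : ℂ) (E S : R)
    (hES : E * S = -(S * E)) (hEE : E * E = 1) :
    (a • (1 : R) + b • E) * S * (a • (1 : R) + (-b) • E) =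
      (a * a + b * b) • S + (2 * (a * b)) • (E * S) := by
  have h1 : E * S * E = -S := by rw [hES, neg_mul, mul_assoc, hEE, mul_one]
  have h2 : S * E = -(E * S) := by rw [hES, neg_neg]
  simp only [add_mul, mul_add, smul_mul_assoc, mul_smul_comm, smul_smul, one_mul, mul_one]
  rw [h2, h1]
  module

/-- The composition of the `π/4` rotations generated by `P(A, j)` and `Y_j`
maps the Z-type stabilizer supported on `A ∪ {j}` to `-Z_j`. -/
theorem stabilizer_rotations_map_Z_stabilizer_to_single_Z
    (n : ℕ) (A : Finset (Fin n)) (j : Fin n) (hj : j ∉ A) :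
    let S := PauliWord n fun i => if i ∈ insert j A then PauliZ else PauliI
    let P := stabRot n A j
    let Yj := PauliWord n fun i => if i = j then PauliY else PauliI
    NormedSpace.exp (((Real.pi / 4 : ℂ) * Complex.I) • Yj) *
        NormedSpace.exp (((Real.pi / 4 : ℂ) * Complex.I) • P) * S *
        NormedSpace.exp ((-((Real.pi / 4 : ℂ) * Complex.I)) • P) *
        NormedSpace.exp ((-((Real.pi / 4 : ℂ) * Complex.I)) • Yj) =
      -(PauliWord n fun i => if i = j then PauliZ else PauliI) := by
  intro S P Yj
  set Xj := PauliWord n (fun i => if i = j then PauliX else PauliI) with hXj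
  set Zj := PauliWord n (fun i => if i = j then PauliZ else PauliI) with hZj
  set c : ℂ := (Real.pi / 4 : ℂ) * Complex.I with hc
  have hS : S = PauliWord n (fun i => if i ∈ insert j A then PauliZ else PauliI) := rfl
  have hP : P = PauliWord n
      (fun i => if i = j then PauliY else if i ∈ A then PauliZ else PauliI) := rfl
  have hYj : Yj = PauliWord n (fun i => if i = j then PauliY else PauliI) := rfl
  -- word products
  have hP2 : P * P = 1 := by
    rw [hP, PauliWord_mul,
      show (fun i => (if i = j then PauliY else if i ∈ A then PauliZ else PauliI) *
          (if i = j then PauliY else if i ∈ A then PauliZ else PauliI)) = fun _ => PauliI from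
        funext fun i => by
          by_cases h1 : i = j <;> by_cases h2 : i ∈ A <;>
            simp [h1, h2, mulYY, mulZZ, PauliI_eq_one]]
    exact PauliWord_one n
  have hY2 : Yj * Yj = 1 := by
    rw [hYj, PauliWord_mul,
      show (fun i => (if i = j then PauliY else PauliI) * (if i = j then PauliY else PauliI)) =
          fun _ => PauliI from
        funext fun i => by by_cases h1 : i = j <;> simp [h1, mulYY, PauliI_eq_one]]
    exact PauliWord_one n
  have hPS : P * S = Complex.I • Xj := by
    rw [hP, hS, PauliWord_mul,
      show (fun i => (if i = j then PauliY else if i ∈ A then PauliZ else PauliI) *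
          (if i ∈ insert j A then PauliZ else PauliI)) =
          fun i => if i = j then Complex.I • PauliX else PauliI from
        funext fun i => by
          by_cases h1 : i = j
          · subst h1; simp [Finset.mem_insert, mulYZ]
          · by_cases h2 : i ∈ A <;>
              simp [h1, h2, Finset.mem_insert, mulZZ, PauliI_eq_one]]
    rw [PauliWord_smul_site n j Complex.I PauliX (fun _ => PauliI), hXj]
  have hSP : S * P = (-Complex.I) • Xj := by
    rw [hP, hS, PauliWord_mul,
      show (fun i => (if i ∈ insert j A then PauliZ else PauliI) *
          (if i = j then PauliY else if i ∈ A then PauliZ else PauliI)) =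
          fun i => if i = j then (-Complex.I) • PauliX else PauliI from
        funext fun i => by
          by_cases h1 : i = j
          · subst h1; simp [Finset.mem_insert, mulZY]
          · by_cases h2 : i ∈ A <;>
              simp [h1, h2, Finset.mem_insert, mulZZ, PauliI_eq_one]]
    rw [PauliWord_smul_site n j (-Complex.I) PauliX (fun _ => PauliI), hXj]
  have hYX : Yj * Xj = (-Complex.I) • Zj := by
    rw [hYj, hXj, PauliWord_mul,
      show (fun i => (if i = j then PauliY else PauliI) * (if i = j then PauliX else PauliI)) =
          fun i => if i = j then (-Complex.I) • PauliZ else PauliI from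
        funext fun i => by by_cases h1 : i = j <;> simp [h1, mulYX, PauliI_eq_one]]
    rw [PauliWord_smul_site n j (-Complex.I) PauliZ (fun _ => PauliI), hZj]
  have hXY : Xj * Yj = Complex.I • Zj := by
    rw [hYj, hXj, PauliWord_mul,
      show (fun i => (if i = j then PauliX else PauliI) * (if i = j then PauliY else PauliI)) =
          fun i => if i = j then Complex.I • PauliZ else PauliI from
        funext fun i => by by_cases h1 : i = j <;> simp [h1, mulXY, PauliI_eq_one]]
    rw [PauliWord_smul_site n j Complex.I PauliZ (fun _ => PauliI), hZj]
  have hanti1 : P * S = -(S * P) := by rw [hPS, hSP]; module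
  have hanti2 : Yj * (-Xj) = -((-Xj) * Yj) := by
    rw [mul_neg, neg_mul, hYX, hXY]; module
  have hY_negX : Yj * (-Xj) = Complex.I • Zj := by rw [mul_neg, hYX]; module
  -- exponentials
  rw [exp_invol P hP2 c, exp_invol P hP2 (-c), exp_invol Yj hY2 c, exp_invol Yj hY2 (-c)]
  simp only [neg_neg]
  set u := Complex.exp c with hu
  set v := Complex.exp (-c) with hv
  have hu2 : u * u = Complex.I := by
    rw [hu, ← Complex.exp_add,
      show c + c = ((π / 2 : ℝ) : ℂ) * Complex.I by rw [hc]; push_cast; ring,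
      Complex.exp_mul_I, ← Complex.ofReal_cos, ← Complex.ofReal_sin,
      Real.cos_pi_div_two, Real.sin_pi_div_two]
    simp
  have hv2 : v * v = -Complex.I := by
    rw [hv, ← Complex.exp_add,
      show -c + -c = ((-(π / 2) : ℝ) : ℂ) * Complex.I by rw [hc]; push_cast; ring,
      Complex.exp_mul_I, ← Complex.ofReal_cos, ← Complex.ofReal_sin,
      Real.cos_neg, Real.sin_neg, Real.cos_pi_div_two, Real.sin_pi_div_two]
    push_cast
    ring
  have hA2 : (u + v) / 2 * ((u + v) / 2) + (u - v) / 2 * ((u - v) / 2) = 0 := by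
    linear_combination (1/2) * hu2 + (1/2) * hv2
  have hB2 : 2 * ((u + v) / 2 * ((u - v) / 2)) = Complex.I := by
    linear_combination (1/2) * hu2 - (1/2) * hv2
  -- reshape the `-c` exponentials
  have hE3 : ((v + u) / 2) • (1 : Matrix (Fin n → Fin 2) (Fin n → Fin 2) ℂ) +
      ((v - u) / 2) • P = ((u + v) / 2) • 1 + (-((u - v) / 2)) • P := by module
  have hE4 : ((v + u) / 2) • (1 : Matrix (Fin n → Fin 2) (Fin n → Fin 2) ℂ) +
      ((v - u) / 2) • Yj = ((u + v) / 2) • 1 + (-((u - v) / 2)) • Yj := by module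
  rw [hE3, hE4]
  have hmid : (((u + v) / 2) • (1 : Matrix (Fin n → Fin 2) (Fin n → Fin 2) ℂ) +
      ((u - v) / 2) • P) * S * (((u + v) / 2) • 1 + (-((u - v) / 2)) • P) = -Xj := by
    rw [conj_lemma ((u + v) / 2) ((u - v) / 2) P S hanti1 hP2, hA2, hB2, hPS]
    simp [smul_smul, Complex.I_mul_I]
  have hfin : (((u + v) / 2) • (1 : Matrix (Fin n → Fin 2) (Fin n → Fin 2) ℂ) +
      ((u - v) / 2) • Yj) * (-Xj) * (((u + v) / 2) • 1 + (-((u - v) / 2)) • Yj) = -Zj := by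
    rw [conj_lemma ((u + v) / 2) ((u - v) / 2) Yj (-Xj) hanti2 hY2, hA2, hB2, hY_negX]
    simp [smul_smul, Complex.I_mul_I]
  rw [← hmid] at hfin
  simpa only [mul_assoc] using hfin
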